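/- Let L, M be root subspaces of H_n. The intersection L ∩ M is a root subspace if and only if every cycle of length at least four in the graph union Γ_L ∪ Γ_M has a chord. -/

import Mathlib

/-- The root `e_i - e_j` in `ℝ^n`. -/
def rootVec (n : ℕ) (i j : Fin n) : Fin n → ℝ :=
  Pi.single i 1 - Pi.single j 1

/-- A root subspace: a linear subspace spanned by a set of roots `e_i - e_j`. -/
def IsRootSubspace {n : ℕ} (L : Submodule ℝ (Fin n → ℝ)) : Prop :=
  ∃ A : Set (Fin n → ℝ),
    (∀ v ∈ A, ∃ i j : Fin n, i ≠ j ∧ v = rootVec n i j) ∧ L = Submodule.span ℝ A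

namespace Stmt2Aux

open Finset

variable {n : ℕ}

lemma rv_self (i : Fin n) : rootVec n i i = 0 := sub_self _

lemma rv_add (i j k : Fin n) : rootVec n i j + rootVec n j k = rootVec n i k := by
  simp [rootVec]

lemma rv_neg (i j : Fin n) : rootVec n j i = -rootVec n i j := by
  simp [rootVec]

lemma rv_apply (i j l : Fin n) :
    rootVec n i j l = (if l = i then 1 else 0) - (if l = j then 1 else 0) := by
  simp [rootVec, Pi.single_apply]

-- rel lemmas for an arbitrary submodule
variable {N : Submodule ℝ (Fin n → ℝ)}

lemma rel_refl (i : Fin n) : rootVec n i i ∈ N := by rw [rv_self]; exact N.zero_mem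

lemma rel_symm {i j : Fin n} (h : rootVec n i j ∈ N) : rootVec n j i ∈ N := by
  rw [rv_neg]; exact N.neg_mem h

lemma rel_trans {i j k : Fin n} (h1 : rootVec n i j ∈ N) (h2 : rootVec n j k ∈ N) :
    rootVec n i k ∈ N := by
  rw [← rv_add i j k]; exact N.add_mem h1 h2

def rootsIn (N : Submodule ℝ (Fin n → ℝ)) : Set (Fin n → ℝ) :=
  {v | ∃ i j : Fin n, i ≠ j ∧ v = rootVec n i j ∧ v ∈ N}

lemma span_rootsIn_le (N : Submodule ℝ (Fin n → ℝ)) :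
    Submodule.span ℝ (rootsIn N) ≤ N := by
  rw [Submodule.span_le]; rintro v ⟨i, j, -, -, hv⟩; exact hv

lemma isRootSubspace_iff (N : Submodule ℝ (Fin n → ℝ)) :
    IsRootSubspace N ↔ N = Submodule.span ℝ (rootsIn N) := by
  constructor
  · rintro ⟨A, hA, rfl⟩
    refine le_antisymm ?_ (span_rootsIn_le _)
    refine Submodule.span_le.2 fun v hv => ?_
    obtain ⟨i, j, hij, rfl⟩ := hA v hv
    exact Submodule.subset_span ⟨i, j, hij, rfl, Submodule.subset_span hv⟩
  · intro h
    exact ⟨rootsIn N, fun v hv => ⟨hv.choose, hv.choose_spec.choose,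
      hv.choose_spec.choose_spec.1, hv.choose_spec.choose_spec.2.1⟩, h⟩

open Classical in
/-- the functional `x ↦ ∑_{i ∈ P} x i`. -/
noncomputable def sfun (P : Fin n → Prop) : (Fin n → ℝ) →ₗ[ℝ] ℝ :=
  ∑ i ∈ Finset.univ.filter P, LinearMap.proj i

open Classical in
lemma sfun_apply (P : Fin n → Prop) (x : Fin n → ℝ) :
    sfun P x = ∑ i ∈ Finset.univ.filter P, x i := by
  simp [sfun, LinearMap.proj]

open Classical in
lemma sfun_rootVec (P : Fin n → Prop) (i j : Fin n) :
    sfun P (rootVec n i j) = (if P i then 1 else 0) - (if P j then 1 else 0) := by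
  rw [sfun_apply]
  have : ∀ l : Fin n, rootVec n i j l = (if l = i then (1:ℝ) else 0) - (if l = j then 1 else 0) :=
    rv_apply i j
  simp only [this, Finset.sum_sub_distrib, Finset.sum_ite_eq', Finset.mem_filter,
    Finset.mem_univ, true_and]

lemma sfun_vanish (P : Fin n → Prop) (N : Submodule ℝ (Fin n → ℝ))
    (h : ∀ i j : Fin n, rootVec n i j ∈ N → (P i ↔ P j)) :
    ∀ v ∈ Submodule.span ℝ (rootsIn N), sfun P v = 0 := by
  have : Submodule.span ℝ (rootsIn N) ≤ LinearMap.ker (sfun P) := by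
    rw [Submodule.span_le]
    rintro v ⟨i, j, hij, rfl, hv⟩
    simp only [SetLike.mem_coe, LinearMap.mem_ker, sfun_rootVec]
    rcases h i j hv with hiff
    by_cases hp : P i
    · simp [hp, hiff.1 hp]
    · rw [if_neg hp, if_neg (fun hq => hp (hiff.2 hq))]; ring
  intro v hv
  exact (LinearMap.mem_ker).1 (this hv)

section WalkAux
open SimpleGraph Walk List

variable {V : Type*} {G : SimpleGraph V}

lemma support_eq_map {x y : V} (p : G.Walk x y) :
    p.support = (List.range (p.length + 1)).map p.getVert := by
  induction p with
  | nil => simp [List.range_succ]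
  | @cons a b c h q ih =>
    rw [support_cons, ih, Walk.length_cons]
    conv_rhs => rw [List.range_succ_eq_map, List.map_cons, List.map_map]
    congr 1

lemma edges_eq_map {x y : V} (p : G.Walk x y) :
    p.edges = (List.range p.length).map (fun i => s(p.getVert i, p.getVert (i+1))) := by
  induction p with
  | nil => simp
  | @cons a b c h q ih =>
    rw [edges_cons, ih, Walk.length_cons]
    conv_rhs => rw [List.range_succ_eq_map, List.map_cons, List.map_map]
    congr 1
    simp [getVert_cons_succ, Walk.getVert_zero]

lemma cycle_getVert_inj {x : V} {c : G.Walk x x} (hc : c.IsCycle)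
    {i j : ℕ} (hi1 : 1 ≤ i) (hik : i ≤ c.length) (hj1 : 1 ≤ j) (hjk : j ≤ c.length)
    (h : c.getVert i = c.getVert j) : i = j := by
  have hnd := hc.2
  have htail : c.support.tail = (List.range c.length).map (fun i => c.getVert (i+1)) := by
    rw [support_eq_map, List.range_succ_eq_map, List.map_cons, List.map_map]; rfl
  rw [htail] at hnd
  have := (List.nodup_map_iff_inj_on List.nodup_range).1 hnd
  have h' := this (i-1) (List.mem_range.2 (by omega)) (j-1) (List.mem_range.2 (by omega))
  have hij : i - 1 + 1 = i := by omega
  have hij' : j - 1 + 1 = j := by omega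
  rw [hij, hij'] at h'
  have := h' h
  omega

lemma mem_edges_idx {x y : V} {p : G.Walk x y} {e : Sym2 V} (h : e ∈ p.edges) :
    ∃ i, i < p.length ∧ s(p.getVert i, p.getVert (i+1)) = e := by
  rw [edges_eq_map] at h
  obtain ⟨i, hi, he⟩ := List.mem_map.1 h
  exact ⟨i, List.mem_range.1 hi, he⟩

lemma getVert_mem_support' {x y : V} (p : G.Walk x y) {i : ℕ} (hi : i ≤ p.length) :
    p.getVert i ∈ p.support := by
  rw [support_eq_map]
  exact List.mem_map.2 ⟨i, List.mem_range.2 (by omega), rfl⟩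

end WalkAux

open SimpleGraph in
lemma part1 {L M : Submodule ℝ (Fin n → ℝ)}
    (G : SimpleGraph (Fin n))
    (hG : G = SimpleGraph.fromRel (fun a b => rootVec n a b ∈ L) ⊔
        SimpleGraph.fromRel (fun a b => rootVec n a b ∈ M))
    (hIs : IsRootSubspace (L ⊓ M)) :
    ∀ (v : Fin n) (c : G.Walk v v), c.IsCycle → 4 ≤ c.length →
      ∃ x ∈ c.support, ∃ y ∈ c.support, G.Adj x y ∧ s(x, y) ∉ c.edges := by
  classical
  intro v c hc hlen
  by_contra hno
  push_neg at hno
  have hadj_of : ∀ a b : Fin n, a ≠ b →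
      (rootVec n a b ∈ L ∨ rootVec n a b ∈ M) → G.Adj a b := by
    intro a b hab h
    rw [hG]
    rcases h with h | h
    · exact Or.inl ⟨hab, Or.inl h⟩
    · exact Or.inr ⟨hab, Or.inl h⟩
  have hof_adj : ∀ a b : Fin n, G.Adj a b →
      (rootVec n a b ∈ L ∨ rootVec n a b ∈ M) := by
    intro a b h
    rw [hG] at h
    rcases h with ⟨-, h | h⟩ | ⟨-, h | h⟩
    · exact Or.inl h
    · exact Or.inl (rel_symm h)
    · exact Or.inr h
    · exact Or.inr (rel_symm h)
  set k := c.length with hk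
  set p := c.getVert with hp
  have hk4 : 4 ≤ k := hlen
  have hp0 : p 0 = v := c.getVert_zero
  have hpk : p k = v := c.getVert_length
  have hadj : ∀ i, i < k → G.Adj (p i) (p (i+1)) := fun i hi => c.adj_getVert_succ hi
  have hinj : ∀ i j, 1 ≤ i → i ≤ k → 1 ≤ j → j ≤ k → p i = p j → i = j :=
    fun i j h1 h2 h3 h4 h => cycle_getVert_inj hc h1 h2 h3 h4 h
  have hmem : ∀ i, i ≤ k → p i ∈ c.support := fun i hi => getVert_mem_support' c hi
  have notedge : ∀ s t, 1 ≤ s → s + 2 ≤ t → t ≤ k - 1 → s(p s, p t) ∉ c.edges := by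
    intro s t hs hst ht hmm
    obtain ⟨i, hi, hie⟩ := mem_edges_idx hmm
    rw [Sym2.eq_iff] at hie
    rcases hie with ⟨h1, h2⟩ | ⟨h1, h2⟩
    · by_cases hi0 : i = 0
      · subst hi0
        have hks : p k = p s := by rw [hpk, ← hp0]; exact h1
        have := hinj k s (by omega) le_rfl hs (by omega) hks
        omega
      · have his : i = s := hinj i s (by omega) (by omega) hs (by omega) h1
        subst his
        have := hinj (i+1) t (by omega) (by omega) (by omega) (by omega) h2
        omega
    · by_cases hi0 : i = 0
      · subst hi0
        have hkt : p k = p t := by rw [hpk, ← hp0]; exact h1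
        have := hinj k t (by omega) le_rfl (by omega) (by omega) hkt
        omega
      · have hit : i = t := hinj i t (by omega) (by omega) (by omega) (by omega) h1
        subst hit
        have := hinj (i+1) s (by omega) (by omega) hs (by omega) h2
        omega
  have notedge_v : ∀ t, 2 ≤ t → t ≤ k - 2 → s(v, p t) ∉ c.edges := by
    intro t ht2 htk hmm
    obtain ⟨i, hi, hie⟩ := mem_edges_idx hmm
    rw [Sym2.eq_iff] at hie
    rcases hie with ⟨h1, h2⟩ | ⟨h1, h2⟩
    · by_cases hi0 : i = 0
      · subst hi0
        have := hinj 1 t (by omega) (by omega) (by omega) (by omega) h2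
        omega
      · have hik : i = k := hinj i k (by omega) (by omega) (by omega) le_rfl (by rw [hpk]; exact h1)
        omega
    · have hik : i + 1 = k := hinj (i+1) k (by omega) (by omega) (by omega) le_rfl (by rw [hpk]; exact h2)
      have : i = t := hinj i t (by omega) (by omega) (by omega) (by omega) h1
      omega
  set P : Fin n → Prop := fun x => rootVec n v x ∈ L ⊓ M with hP
  have hPv : P v := rel_refl v
  have C1 : ∀ i, 1 ≤ i → i ≤ k - 1 → ¬ P (p i) := by
    intro i h1 h2 hPi
    have hPL : rootVec n v (p i) ∈ L := hPi.1
    have hPM : rootVec n v (p i) ∈ M := hPi.2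
    have hvne : v ≠ p i := by
      intro he
      have hki : p k = p i := by rw [hpk]; exact he
      have := hinj k i (by omega) le_rfl h1 (by omega) hki
      omega
    have hA : G.Adj v (p i) := hadj_of _ _ hvne (Or.inl hPL)
    have hE : s(v, p i) ∈ c.edges := hno v c.start_mem_support (p i) (hmem i (by omega)) hA
    have hi' : i = 1 ∨ i = k - 1 := by
      by_contra hcon
      push_neg at hcon
      exact notedge_v i (by omega) (by omega) hE
    rcases hi' with rfl | hik
    · have h12 := hof_adj _ _ (hadj 1 (by omega))
      have hv2 : rootVec n v (p 2) ∈ L ∨ rootVec n v (p 2) ∈ M := by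
        rcases h12 with h | h
        · exact Or.inl (rel_trans hPL h)
        · exact Or.inr (rel_trans hPM h)
      have hvne2 : v ≠ p 2 := by
        intro he
        have hk2 : p k = p 2 := by rw [hpk]; exact he
        have := hinj k 2 (by omega) le_rfl (by omega) (by omega) hk2
        omega
      have hA2 : G.Adj v (p 2) := hadj_of _ _ hvne2 hv2
      exact notedge_v 2 le_rfl (by omega)
        (hno v c.start_mem_support (p 2) (hmem 2 (by omega)) hA2)
    · subst hik
      have e1 : k - 2 + 1 = k - 1 := by omega
      have h12 := hof_adj _ _ (hadj (k-2) (by omega))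
      rw [e1] at h12
      have hv2 : rootVec n v (p (k-2)) ∈ L ∨ rootVec n v (p (k-2)) ∈ M := by
        rcases h12 with h | h
        · exact Or.inl (rel_trans hPL (rel_symm h))
        · exact Or.inr (rel_trans hPM (rel_symm h))
      have hvne2 : v ≠ p (k-2) := by
        intro he
        have hk2 : p k = p (k-2) := by rw [hpk]; exact he
        have := hinj k (k-2) (by omega) le_rfl (by omega) (by omega) hk2
        omega
      have hA2 : G.Adj v (p (k-2)) := hadj_of _ _ hvne2 hv2
      exact notedge_v (k-2) (by omega) (by omega)
        (hno v c.start_mem_support (p (k-2)) (hmem (k-2) (by omega)) hA2)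
  have hC2 : ¬((rootVec n (p 0) (p 1) ∈ L) ↔ (rootVec n (p (k-1)) (p k) ∈ L)) := by
    intro hiff
    have hek : k - 1 + 1 = k := by omega
    have hchord : rootVec n (p 1) (p (k-1)) ∈ L ∨ rootVec n (p 1) (p (k-1)) ∈ M := by
      by_cases d0 : rootVec n (p 0) (p 1) ∈ L
      · have dl := hiff.1 d0
        have h0k : rootVec n (p 0) (p (k-1)) ∈ L := by
          have := rel_symm dl
          rw [hpk, ← hp0] at this
          exact this
        exact Or.inl (rel_trans (rel_symm d0) h0k)
      · have dl : ¬ rootVec n (p (k-1)) (p k) ∈ L := fun h => d0 (hiff.2 h)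
        have hM0 : rootVec n (p 0) (p 1) ∈ M := by
          rcases hof_adj _ _ (hadj 0 (by omega)) with h | h
          · exact absurd h d0
          · exact h
        have hMl : rootVec n (p (k-1)) (p k) ∈ M := by
          have h := hof_adj _ _ (hadj (k-1) (by omega))
          rw [hek] at h
          rcases h with h | h
          · exact absurd h dl
          · exact h
        have h0k : rootVec n (p 0) (p (k-1)) ∈ M := by
          have := rel_symm hMl
          rw [hpk, ← hp0] at this
          exact this
        exact Or.inr (rel_trans (rel_symm hM0) h0k)
    have hne1 : p 1 ≠ p (k-1) := by
      intro he
      have := hinj 1 (k-1) le_rfl (by omega) (by omega) (by omega) he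
      omega
    have hA := hadj_of _ _ hne1 hchord
    have hE := hno (p 1) (hmem 1 (by omega)) (p (k-1)) (hmem (k-1) (by omega)) hA
    exact notedge 1 (k-1) le_rfl (by omega) (by omega) hE
  set u : Fin n → ℝ := ∑ i ∈ Finset.range k,
      (if rootVec n (p i) (p (i+1)) ∈ L then rootVec n (p i) (p (i+1)) else 0) with hu
  have huL : u ∈ L := Submodule.sum_mem _ (fun i _ => by
    split_ifs with h
    · exact h
    · exact L.zero_mem)
  have tele : ∀ m : ℕ, ∑ i ∈ Finset.range m, rootVec n (p i) (p (i+1)) = rootVec n (p 0) (p m) := by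
    intro m
    induction m with
    | zero => simp [rv_self]
    | succ m ih => rw [Finset.sum_range_succ, ih, rv_add]
  have huM : u ∈ M := by
    have h0 : ∑ i ∈ Finset.range k, rootVec n (p i) (p (i+1)) = 0 := by
      rw [tele k, hp0, hpk, rv_self]
    have hdiff : (∑ i ∈ Finset.range k, rootVec n (p i) (p (i+1))) - u
        = ∑ i ∈ Finset.range k,
            (if rootVec n (p i) (p (i+1)) ∈ L then 0 else rootVec n (p i) (p (i+1))) := by
      rw [hu, ← Finset.sum_sub_distrib]
      refine Finset.sum_congr rfl fun i _ => ?_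
      split_ifs with h <;> simp
    have hmem' : (∑ i ∈ Finset.range k, rootVec n (p i) (p (i+1))) - u ∈ M := by
      rw [hdiff]
      refine Submodule.sum_mem _ fun i hi => ?_
      split_ifs with h
      · exact M.zero_mem
      · rcases hof_adj _ _ (hadj i (Finset.mem_range.1 hi)) with h' | h'
        · exact absurd h' h
        · exact h'
    rw [h0, zero_sub] at hmem'
    have := M.neg_mem hmem'
    simpa using this
  have hspan := (isRootSubspace_iff (L ⊓ M)).1 hIs
  have hu0 : sfun P u = 0 := by
    refine sfun_vanish P (L ⊓ M) ?_ u (by rw [← hspan]; exact ⟨huL, huM⟩)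
    intro i j hij
    constructor
    · intro hPi
      exact rel_trans hPi hij
    · intro hPj
      exact rel_trans hPj (rel_symm hij)
  have hφu : sfun P u = (if rootVec n (p 0) (p 1) ∈ L then (1:ℝ) else 0)
      - (if rootVec n (p (k-1)) (p k) ∈ L then (1:ℝ) else 0) := by
    rw [hu, map_sum]
    have hterm : ∀ i ∈ Finset.range k,
        sfun P (if rootVec n (p i) (p (i+1)) ∈ L then rootVec n (p i) (p (i+1)) else 0)
        = (if rootVec n (p i) (p (i+1)) ∈ L then
            ((if P (p i) then (1:ℝ) else 0) - (if P (p (i+1)) then (1:ℝ) else 0)) else 0) := by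
      intro i _
      by_cases h : rootVec n (p i) (p (i+1)) ∈ L
      · rw [if_pos h, if_pos h]
        exact sfun_rootVec P _ _
      · rw [if_neg h, if_neg h]
        exact map_zero _
    rw [Finset.sum_congr rfl hterm]
    have hsub : ({0, k-1} : Finset ℕ) ⊆ Finset.range k := by
      intro i hi
      simp only [Finset.mem_insert, Finset.mem_singleton] at hi
      rcases hi with rfl | rfl <;> simp [Finset.mem_range] <;> omega
    have hzero : ∀ i ∈ Finset.range k, i ∉ ({0, k-1} : Finset ℕ) →
        (if rootVec n (p i) (p (i+1)) ∈ L then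
            ((if P (p i) then (1:ℝ) else 0) - (if P (p (i+1)) then (1:ℝ) else 0)) else 0) = 0 := by
      intro i hi hni
      simp only [Finset.mem_insert, Finset.mem_singleton, not_or] at hni
      have hi' := Finset.mem_range.1 hi
      rw [if_neg (C1 i (by omega) (by omega)), if_neg (C1 (i+1) (by omega) (by omega))]
      split_ifs <;> simp
    rw [← Finset.sum_subset hsub hzero]
    rw [Finset.sum_pair (by omega : (0:ℕ) ≠ k - 1)]
    have hek : k - 1 + 1 = k := by omega
    simp only [hek, Nat.zero_add]
    rw [if_pos (show P (p 0) by rw [hp0]; exact hPv), if_neg (C1 1 le_rfl (by omega)),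
      if_neg (C1 (k-1) (by omega) le_rfl), if_pos (show P (p k) by rw [hpk]; exact hPv)]
    split_ifs <;> ring
  rw [hu0] at hφu
  by_cases d0 : rootVec n (p 0) (p 1) ∈ L <;> by_cases dl : rootVec n (p (k-1)) (p k) ∈ L
  · exact hC2 ⟨fun _ => dl, fun _ => d0⟩
  · rw [if_pos d0, if_neg dl] at hφu; norm_num at hφu
  · rw [if_neg d0, if_pos dl] at hφu; norm_num at hφu
  · exact hC2 ⟨fun h => absurd h d0, fun h => absurd h dl⟩


section Alt

variable (a b : Fin n → Fin n → Prop)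

def APath (S : Finset (Fin n)) (k : ℕ) (g : ℕ → Fin n) : Prop :=
  (∀ i, i ≤ k → g i ∈ S) ∧
  (∀ i, i ≤ k → ∀ j, j ≤ k → i ≠ j → ¬(a (g i) (g j) ∧ b (g i) (g j))) ∧
  (∀ i, i < k → ((k - 1 - i) % 2 = 0 → a (g i) (g (i+1)) ∧ ¬ b (g i) (g (i+1))) ∧
            ((k - 1 - i) % 2 = 1 → b (g i) (g (i+1)) ∧ ¬ a (g i) (g (i+1))))

def ACy (ℓ : ℕ) (f : ℕ → Fin n) : Prop :=
  4 ≤ ℓ ∧ ℓ % 2 = 0 ∧ f ℓ = f 0 ∧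
  (∀ i, i < ℓ → ∀ j, j < ℓ → i ≠ j → ¬(a (f i) (f j) ∧ b (f i) (f j))) ∧
  (∀ i, i < ℓ → (i % 2 = 0 → a (f i) (f (i+1)) ∧ ¬ b (f i) (f (i+1))) ∧
            (i % 2 = 1 → b (f i) (f (i+1)) ∧ ¬ a (f i) (f (i+1))))

variable {a b}

lemma ext_step
    (has : ∀ x y, a x y → a y x) (hat : ∀ x y z, a x y → a y z → a x z)
    (hbs : ∀ x y, b x y → b y x) (hbt : ∀ x y z, b x y → b y z → b x z)
    {S : Finset (Fin n)}
    (noleaf : ∀ i ∈ S, (∃ j ∈ S, a i j ∧ ¬ b i j) ∧ (∃ j ∈ S, b i j ∧ ¬ a i j))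
    {k : ℕ} {g : ℕ → Fin n} (hk : 1 ≤ k) (hpath : APath a b S k g)
    (hmax : ∀ k' g', (APath a b S k' g' ∨ APath b a S k' g') → k' ≤ k) :
    ∃ ℓ f, ACy a b ℓ f := by
  obtain ⟨hS, hnc, halt⟩ := hpath
  have hlast : a (g (k-1)) (g k) ∧ ¬ b (g (k-1)) (g k) := by
    have h := (halt (k-1) (by omega)).1 (by omega)
    have e : k - 1 + 1 = k := by omega
    rwa [e] at h
  obtain ⟨-, j, hjS, hbj, hnaj⟩ := noleaf (g k) (hS k le_rfl)
  by_cases hfree : ∀ i, i ≤ k → ¬(a j (g i) ∧ b j (g i))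
  · set g' : ℕ → Fin n := fun i => if i ≤ k then g i else j with hg'
    have hext : APath b a S (k+1) g' := by
      refine ⟨?_, ?_, ?_⟩
      · intro i hi
        by_cases h : i ≤ k
        · simpa [hg', h] using hS i h
        · simpa [hg', h] using hjS
      · intro i hi j' hj' hij
        by_cases h1 : i ≤ k <;> by_cases h2 : j' ≤ k
        · simp only [hg', if_pos h1, if_pos h2]
          intro ⟨hb', ha'⟩
          exact (hnc i h1 j' h2 hij) ⟨ha', hb'⟩
        · have : j' = k + 1 := by omega
          subst this
          simp only [hg', if_pos h1, if_neg (by omega : ¬ k + 1 ≤ k)]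
          intro ⟨hb', ha'⟩
          exact (hfree i h1) ⟨has _ _ ha', hbs _ _ hb'⟩
        · have : i = k + 1 := by omega
          subst this
          simp only [hg', if_neg (by omega : ¬ k + 1 ≤ k), if_pos h2]
          intro ⟨hb', ha'⟩
          exact (hfree j' h2) ⟨ha', hb'⟩
        · omega
      · intro i hi
        constructor
        · intro hpar
          by_cases h : i < k
          · have h' := (halt i h).2 (by omega)
            simpa [hg', (by omega : i ≤ k), (by omega : i + 1 ≤ k)] using h'
          · have hik : i = k := by omega
            rw [hik]
            simp only [hg', if_pos (le_refl k), if_neg (by omega : ¬ k + 1 ≤ k)]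
            exact ⟨hbj, hnaj⟩
        · intro hpar
          by_cases h : i < k
          · have h' := (halt i h).1 (by omega)
            simpa [hg', (by omega : i ≤ k), (by omega : i + 1 ≤ k)] using h'
          · omega
    have := hmax (k+1) g' (Or.inr hext)
    omega
  · push_neg at hfree
    obtain ⟨i₀, hi₀k, hci⟩ := hfree
    have hcol : b (g k) (g i₀) ∧ ¬ a (g k) (g i₀) := by
      refine ⟨hbt _ _ _ hbj hci.2, fun ha' => hnaj ?_⟩
      exact hat _ _ _ ha' (has _ _ hci.1)
    have hi0ne : i₀ ≠ k := fun h => hnaj (has _ _ (h ▸ hci.1))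
    set P : ℕ → Prop := fun i => b (g k) (g i) ∧ ¬ a (g k) (g i) with hPdef
    classical
    set i₁ := Nat.findGreatest P (k-1) with hi₁def
    have hP1 : P i₁ := Nat.findGreatest_spec (by omega : i₀ ≤ k - 1) hcol
    have hgreat : ∀ m, i₁ < m → m ≤ k - 1 → ¬ P m :=
      fun m hm hm' => Nat.findGreatest_is_greatest hm hm'
    have hi₁le : i₁ ≤ k - 1 := Nat.findGreatest_le _
    have hi1ne : i₁ ≠ k - 1 := by
      intro h
      rw [h] at hP1
      exact hP1.2 (has _ _ hlast.1)
    have hi₁le2 : i₁ ≤ k - 2 := by omega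
    have hpar : (k - 1 - i₁) % 2 = 0 := by
      by_contra hodd
      have hodd' : (k - 1 - i₁) % 2 = 1 := by omega
      have hedge := (halt i₁ (by omega)).2 hodd'
      have hb2 : b (g k) (g (i₁+1)) := hbt _ _ _ hP1.1 hedge.1
      have hna2 : ¬ a (g k) (g (i₁+1)) := by
        intro ha2
        exact hnc k le_rfl (i₁+1) (by omega) (by omega) ⟨ha2, hb2⟩
      exact hgreat (i₁+1) (by omega) (by omega) ⟨hb2, hna2⟩
    set ℓ := k - i₁ + 1 with hℓdef
    set f : ℕ → Fin n := fun t => if t ≤ ℓ - 1 then g (i₁ + t) else g i₁ with hfdef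
    have hfA : ∀ t, t ≤ ℓ - 1 → f t = g (i₁ + t) := fun t ht => if_pos ht
    have hf0 : f 0 = g i₁ := hfA 0 (by omega)
    have hfl : f (ℓ-1) = g k := by
      rw [hfA (ℓ-1) le_rfl, (by omega : i₁ + (ℓ - 1) = k)]
    have hfℓ : f ℓ = g i₁ := if_neg (by omega)
    refine ⟨ℓ, f, by omega, by omega, by rw [hfℓ, hf0], ?_, ?_⟩
    · intro i hi j' hj' hij
      rw [hfA i (by omega), hfA j' (by omega)]
      exact hnc (i₁ + i) (by omega) (i₁ + j') (by omega) (by omega)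
    · intro i hi
      by_cases hilast : i < ℓ - 1
      · rw [hfA i (by omega), hfA (i+1) (by omega), (by omega : i₁ + i + 1 = i₁ + (i + 1)).symm]
        constructor
        · intro hp
          exact (halt (i₁ + i) (by omega)).1 (by omega)
        · intro hp
          exact (halt (i₁ + i) (by omega)).2 (by omega)
      · have hieq : i = ℓ - 1 := by omega
        subst hieq
        rw [hfl, (by omega : ℓ - 1 + 1 = ℓ), hfℓ]
        constructor
        · intro hp
          omega
        · intro hp
          exact hP1
    
lemma exists_ACy
    (har : ∀ x, a x x) (has : ∀ x y, a x y → a y x) (hat : ∀ x y z, a x y → a y z → a x z)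
    (hbr : ∀ x, b x x) (hbs : ∀ x y, b x y → b y x) (hbt : ∀ x y z, b x y → b y z → b x z)
    {S : Finset (Fin n)} (hSne : S.Nonempty)
    (noleaf : ∀ i ∈ S, (∃ j ∈ S, a i j ∧ ¬ b i j) ∧ (∃ j ∈ S, b i j ∧ ¬ a i j)) :
    ∃ ℓ f, ACy a b ℓ f ∨ ACy b a ℓ f := by
  classical
  obtain ⟨i₀, hi₀⟩ := hSne
  have hn : 0 < n := (i₀ : Fin n).pos
  set K : ℕ → Prop := fun k => ∃ g, APath a b S k g ∨ APath b a S k g with hK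
  -- any alternating path has pairwise distinct vertices, hence k + 1 ≤ n
  have hbound : ∀ k, K k → k + 1 ≤ n := by
    intro k ⟨g, hg⟩
    have hnc : ∀ i, i ≤ k → ∀ j, j ≤ k → i ≠ j → g i ≠ g j := by
      intro i hi j hj hij he
      rcases hg with hg | hg
      · exact hg.2.1 i hi j hj hij (by rw [he]; exact ⟨har _, hbr _⟩)
      · exact hg.2.1 i hi j hj hij (by rw [he]; exact ⟨hbr _, har _⟩)
    have : (Finset.range (k+1)).card ≤ (Finset.univ : Finset (Fin n)).card := by
      apply Finset.card_le_card_of_injOn g (fun i _ => Finset.mem_univ _)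
      intro i hi j hj he
      by_contra hij
      exact hnc i (by simpa using Nat.lt_succ_iff.1 (Finset.mem_range.1 hi))
        j (by simpa using Nat.lt_succ_iff.1 (Finset.mem_range.1 hj)) hij he
    simpa using this
  have hK1 : K 1 := by
    obtain ⟨⟨j, hjS, haj, hnbj⟩, -⟩ := noleaf i₀ hi₀
    refine ⟨fun t => if t = 0 then i₀ else j, Or.inl ⟨?_, ?_, ?_⟩⟩
    · intro i hi
      by_cases h : i = 0 <;> simp [h, hi₀, hjS]
    · intro i hi j' hj' hij
      have hne1 : ¬ (a i₀ j ∧ b i₀ j) := fun h => hnbj h.2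
      interval_cases i <;> interval_cases j'
      · omega
      · simpa using hne1
      · simp only [if_neg (by omega : (1:ℕ) ≠ 0), if_pos rfl]
        intro h
        exact hnbj (hbs _ _ h.2)
      · omega
    · intro i hi
      interval_cases i
      simp only [if_pos rfl, if_neg (by omega : (1:ℕ) ≠ 0)]
      exact ⟨fun _ => ⟨haj, hnbj⟩, fun h => by omega⟩
  set k₀ := Nat.findGreatest K n with hk₀def
  have hK₀ : K k₀ := Nat.findGreatest_spec (by omega) hK1
  have hk₀1 : 1 ≤ k₀ := Nat.le_findGreatest (by omega) hK1
  have hmax : ∀ k' g', (APath a b S k' g' ∨ APath b a S k' g') → k' ≤ k₀ := by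
    intro k' g' h
    exact Nat.le_findGreatest (by have := hbound k' ⟨g', h⟩; omega) ⟨g', h⟩
  obtain ⟨g, hg | hg⟩ := hK₀
  · obtain ⟨ℓ, f, hf⟩ := ext_step has hat hbs hbt noleaf hk₀1 hg hmax
    exact ⟨ℓ, f, Or.inl hf⟩
  · obtain ⟨ℓ, f, hf⟩ := ext_step hbs hbt has hat
      (fun i hi => ⟨(noleaf i hi).2, (noleaf i hi).1⟩) hk₀1 hg
      (fun k' g' h => hmax k' g' h.symm)
    exact ⟨ℓ, f, Or.inr hf⟩

lemma chord_kill
    (has : ∀ x y, a x y → a y x) (hat : ∀ x y z, a x y → a y z → a x z)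
    (hbs : ∀ x y, b x y → b y x) (hbt : ∀ x y z, b x y → b y z → b x z)
    {ℓ : ℕ} {f : ℕ → Fin n} (hf : ACy a b ℓ f)
    (hmin : ∀ ℓ' f', ℓ' < ℓ → ¬(ACy a b ℓ' f' ∨ ACy b a ℓ' f')) :
    ∀ d, 2 ≤ d → d ≤ ℓ - 2 → ∀ s, s + d < ℓ →
      ¬(a (f s) (f (s + d)) ∨ b (f s) (f (s + d))) := by
  classical
  obtain ⟨hl4, hleven, hclose, hnc, halt⟩ := hf
  intro d
  induction d using Nat.strong_induction_on with
  | _ d IH =>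
  intro hd2 hdl s hsd hchord
  have hncst : ¬(a (f s) (f (s+d)) ∧ b (f s) (f (s+d))) :=
    hnc s (by omega) (s+d) (by omega) (by omega)
  rcases hchord with hTa | hTb
  · have hnb : ¬ b (f s) (f (s+d)) := fun h => hncst ⟨hTa, h⟩
    rcases Nat.mod_two_eq_zero_or_one s with hsp | hsp
    · -- chord letter a, edge s letter a: shrink forward
      have he_s := (halt s (by omega)).1 hsp
      have hder : a (f (s+1)) (f (s+d)) := hat _ _ _ (has _ _ he_s.1) hTa
      by_cases hd : d = 2
      · subst hd
        have he1 := (halt (s+1) (by omega)).2 (by omega)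
        rw [(by omega : s + 2 = s + 1 + 1)] at hder
        exact he1.2 hder
      · have hIH := IH (d-1) (by omega) (by omega) (by omega) (s+1) (by omega)
        rw [(by omega : s + 1 + (d - 1) = s + d)] at hIH
        exact hIH (Or.inl hder)
    · rcases Nat.mod_two_eq_zero_or_one (s+d-1) with hgp | hgp
      · -- chord letter a, edge (t-1) letter a: shrink backward
        have he_g := (halt (s+d-1) (by omega)).1 hgp
        rw [(by omega : s + d - 1 + 1 = s + d)] at he_g
        have hder : a (f s) (f (s+d-1)) := hat _ _ _ hTa (has _ _ he_g.1)
        by_cases hd : d = 2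
        · subst hd
          rw [(by omega : s + 2 - 1 = s + 1)] at hder
          exact ((halt s (by omega)).2 hsp).2 hder
        · have hIH := IH (d-1) (by omega) (by omega) (by omega) s (by omega)
          rw [(by omega : s + (d - 1) = s + d - 1)] at hIH
          exact hIH (Or.inl hder)
      · -- both neighbouring edges have letter b : build a shorter cycle
        have hdodd : d % 2 = 1 := by omega
        set f' : ℕ → Fin n := fun t => if t ≤ d then f (s + t) else f s with hf'
        have hfA : ∀ t, t ≤ d → f' t = f (s + t) := fun t ht => if_pos ht
        have hf'0 : f' 0 = f s := by rw [hfA 0 (by omega), Nat.add_zero]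
        have hf'e : f' (d+1) = f s := if_neg (by omega)
        have hcyc : ACy b a (d+1) f' := by
          refine ⟨by omega, by omega, by rw [hf'e, hf'0], ?_, ?_⟩
          · intro i hi j hj hij
            rw [hfA i (by omega), hfA j (by omega)]
            intro ⟨h1, h2⟩
            exact hnc (s+i) (by omega) (s+j) (by omega) (by omega) ⟨h2, h1⟩
          · intro i hi
            by_cases hid : i < d
            · rw [hfA i (by omega), hfA (i+1) (by omega)]
              constructor
              · intro hp
                exact (halt (s+i) (by omega)).2 (by omega)
              · intro hp
                exact (halt (s+i) (by omega)).1 (by omega)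
            · have hieq : i = d := by omega
              subst hieq
              rw [hfA i le_rfl, hf'e]
              constructor
              · intro hp; omega
              · intro hp
                exact ⟨has _ _ hTa, fun h => hnb (hbs _ _ h)⟩
        exact hmin (d+1) f' (by omega) (Or.inr hcyc)
  · have hna : ¬ a (f s) (f (s+d)) := fun h => hncst ⟨h, hTb⟩
    rcases Nat.mod_two_eq_zero_or_one s with hsp | hsp
    · rcases Nat.mod_two_eq_zero_or_one (s+d-1) with hgp | hgp
      · -- chord letter b, both neighbouring edges letter a : shorter cycle
        have hdodd : d % 2 = 1 := by omega
        set f' : ℕ → Fin n := fun t => if t ≤ d then f (s + t) else f s with hf'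
        have hfA : ∀ t, t ≤ d → f' t = f (s + t) := fun t ht => if_pos ht
        have hf'0 : f' 0 = f s := by rw [hfA 0 (by omega), Nat.add_zero]
        have hf'e : f' (d+1) = f s := if_neg (by omega)
        have hcyc : ACy a b (d+1) f' := by
          refine ⟨by omega, by omega, by rw [hf'e, hf'0], ?_, ?_⟩
          · intro i hi j hj hij
            rw [hfA i (by omega), hfA j (by omega)]
            exact hnc (s+i) (by omega) (s+j) (by omega) (by omega)
          · intro i hi
            by_cases hid : i < d
            · rw [hfA i (by omega), hfA (i+1) (by omega)]
              constructor
              · intro hp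
                exact (halt (s+i) (by omega)).1 (by omega)
              · intro hp
                exact (halt (s+i) (by omega)).2 (by omega)
            · have hieq : i = d := by omega
              subst hieq
              rw [hfA i le_rfl, hf'e]
              constructor
              · intro hp; omega
              · intro hp
                exact ⟨hbs _ _ hTb, fun h => hna (has _ _ h)⟩
        exact hmin (d+1) f' (by omega) (Or.inl hcyc)
      · -- chord letter b, edge (t-1) letter b: shrink backward
        have he_g := (halt (s+d-1) (by omega)).2 hgp
        rw [(by omega : s + d - 1 + 1 = s + d)] at he_g
        have hder : b (f s) (f (s+d-1)) := hbt _ _ _ hTb (hbs _ _ he_g.1)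
        by_cases hd : d = 2
        · subst hd
          rw [(by omega : s + 2 - 1 = s + 1)] at hder
          exact ((halt s (by omega)).1 hsp).2 hder
        · have hIH := IH (d-1) (by omega) (by omega) (by omega) s (by omega)
          rw [(by omega : s + (d - 1) = s + d - 1)] at hIH
          exact hIH (Or.inr hder)
    · -- chord letter b, edge s letter b: shrink forward
      have he_s := (halt s (by omega)).2 hsp
      have hder : b (f (s+1)) (f (s+d)) := hbt _ _ _ (hbs _ _ he_s.1) hTb
      by_cases hd : d = 2
      · subst hd
        have he1 := (halt (s+1) (by omega)).1 (by omega)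
        rw [(by omega : s + 2 = s + 1 + 1)] at hder
        exact he1.2 hder
      · have hIH := IH (d-1) (by omega) (by omega) (by omega) (s+1) (by omega)
        rw [(by omega : s + 1 + (d - 1) = s + d)] at hIH
        exact hIH (Or.inr hder)

end Alt

section WalkBuild
open SimpleGraph

variable {V : Type*} {G : SimpleGraph V}

def walkFrom (f : ℕ → V) : (m : ℕ) → (s : ℕ) →
    (∀ i, i < m → G.Adj (f (s+i)) (f (s+i+1))) → G.Walk (f s) (f (s+m))
  | 0, s, _ => Walk.nil
  | (m+1), s, h =>
      (Walk.cons (h 0 (by omega))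
        (walkFrom f m (s+1) (fun i hi => by
          rw [(by omega : s + 1 + i = s + (i+1))]
          exact h (i+1) (by omega)))).copy rfl (by rw [(by omega : s + 1 + m = s + (m+1))])

lemma walkFrom_length (f : ℕ → V) : ∀ (m s : ℕ)
    (h : ∀ i, i < m → G.Adj (f (s+i)) (f (s+i+1))),
    (walkFrom f m s h).length = m := by
  intro m
  induction m with
  | zero => intro s h; rfl
  | succ m ih =>
    intro s h
    rw [walkFrom, Walk.length_copy, Walk.length_cons, ih]

lemma walkFrom_support (f : ℕ → V) : ∀ (m s : ℕ)
    (h : ∀ i, i < m → G.Adj (f (s+i)) (f (s+i+1))),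
    (walkFrom f m s h).support = (List.range (m+1)).map (fun i => f (s+i)) := by
  intro m
  induction m with
  | zero => intro s h; simp [walkFrom, List.range_succ]
  | succ m ih =>
    intro s h
    rw [walkFrom, Walk.support_copy, Walk.support_cons, ih]
    conv_rhs => rw [List.range_succ_eq_map, List.map_cons, List.map_map]
    congr 1
    refine List.map_congr_left fun i _ => ?_
    simp only [Function.comp_apply]
    rw [(by omega : s + 1 + i = s + (i+1))]

lemma walkFrom_edges (f : ℕ → V) : ∀ (m s : ℕ)
    (h : ∀ i, i < m → G.Adj (f (s+i)) (f (s+i+1))),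
    (walkFrom f m s h).edges = (List.range m).map (fun i => s(f (s+i), f (s+i+1))) := by
  intro m
  induction m with
  | zero => intro s h; rfl
  | succ m ih =>
    intro s h
    rw [walkFrom, Walk.edges_copy, Walk.edges_cons, ih]
    conv_rhs => rw [List.range_succ_eq_map, List.map_cons, List.map_map]
    congr 1
    refine List.map_congr_left fun i _ => ?_
    simp only [Function.comp_apply]
    rw [(by omega : s + 1 + i = s + (i+1))]

end WalkBuild

section Contra
open SimpleGraph

variable {a b : Fin n → Fin n → Prop}

lemma acy_contra
    (har : ∀ x, a x x) (has : ∀ x y, a x y → a y x) (hat : ∀ x y z, a x y → a y z → a x z)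
    (hbr : ∀ x, b x x) (hbs : ∀ x y, b x y → b y x) (hbt : ∀ x y z, b x y → b y z → b x z)
    {G : SimpleGraph (Fin n)}
    (hadjiff : ∀ x y, G.Adj x y ↔ x ≠ y ∧ (a x y ∨ b x y))
    (Hch : ∀ (v : Fin n) (c : G.Walk v v), c.IsCycle → 4 ≤ c.length →
        ∃ x ∈ c.support, ∃ y ∈ c.support, G.Adj x y ∧ s(x, y) ∉ c.edges)
    {ℓ : ℕ} {f : ℕ → Fin n} (hf : ACy a b ℓ f)
    (hmin : ∀ ℓ' f', ℓ' < ℓ → ¬(ACy a b ℓ' f' ∨ ACy b a ℓ' f')) : False := by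
  classical
  obtain ⟨hl4, hlev, hclose, hnc, halt⟩ := id hf
  have hne : ∀ i j, i < ℓ → j < ℓ → i ≠ j → f i ≠ f j := by
    intro i j hi hj hij he
    exact hnc i hi j hj hij (by rw [he]; exact ⟨har _, hbr _⟩)
  have hEdge : ∀ i, i < ℓ → (a (f i) (f (i+1)) ∨ b (f i) (f (i+1))) := by
    intro i hi
    rcases Nat.mod_two_eq_zero_or_one i with hp | hp
    · exact Or.inl ((halt i hi).1 hp).1
    · exact Or.inr ((halt i hi).2 hp).1
  have hne_succ : ∀ i, i < ℓ → f i ≠ f (i+1) := by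
    intro i hi he
    by_cases h : i + 1 < ℓ
    · exact hne i (i+1) hi h (by omega) he
    · rw [(by omega : i + 1 = ℓ), hclose] at he
      exact hne i 0 hi (by omega) (by omega) he
  have hadj : ∀ i, i < ℓ → G.Adj (f i) (f (i+1)) :=
    fun i hi => (hadjiff _ _).2 ⟨hne_succ i hi, hEdge i hi⟩
  have hadj0 : ∀ i, i < ℓ → G.Adj (f (0+i)) (f (0+i+1)) := by
    intro i hi
    rw [Nat.zero_add]
    exact hadj i hi
  set w : G.Walk (f 0) (f 0) :=
    (walkFrom f ℓ 0 hadj0).copy rfl (by rw [Nat.zero_add, hclose]) with hwdef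
  have hlen : w.length = ℓ := by
    rw [hwdef, Walk.length_copy, walkFrom_length]
  have hsupp : w.support = (List.range (ℓ+1)).map f := by
    rw [hwdef, Walk.support_copy, walkFrom_support]
    exact List.map_congr_left fun i _ => by rw [Nat.zero_add]
  have hedges : w.edges = (List.range ℓ).map (fun i => s(f i, f (i+1))) := by
    rw [hwdef, Walk.edges_copy, walkFrom_edges]
    exact List.map_congr_left fun i _ => by rw [Nat.zero_add]
  have hcyc : w.IsCycle := by
    rw [Walk.isCycle_def]
    refine ⟨?_, ?_, ?_⟩
    · rw [Walk.isTrail_def, hedges]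
      refine (List.nodup_map_iff_inj_on List.nodup_range).2 ?_
      intro i hi j hj he
      have hi' := List.mem_range.1 hi
      have hj' := List.mem_range.1 hj
      rw [Sym2.eq_iff] at he
      by_contra hij
      rcases he with ⟨h1, h2⟩ | ⟨h1, h2⟩
      · exact hne i j hi' hj' hij h1
      · by_cases hj1 : j + 1 = ℓ
        · rw [hj1, hclose] at h1
          have hi0 : i = 0 := by
            by_contra h0
            exact hne i 0 hi' (by omega) h0 h1
          rw [hi0] at h2
          exact hne 1 j (by omega) hj' (by omega) h2
        · have hij1 : i = j + 1 := by
            by_contra h0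
            exact hne i (j+1) hi' (by omega) h0 h1
          by_cases hi1 : i + 1 = ℓ
          · rw [hi1, hclose] at h2
            have hj0 : j = 0 := by
              by_contra h0
              exact hne 0 j (by omega) hj' (fun hh => h0 hh.symm) h2
            omega
          · exact hne (i+1) j (by omega) hj' (by omega) h2
    · intro hnil
      have h0 : w.length = 0 := by rw [hnil]; rfl
      omega
    · rw [hsupp, List.range_succ_eq_map, List.map_cons, List.map_map, List.tail_cons]
      refine (List.nodup_map_iff_inj_on List.nodup_range).2 ?_
      intro i hi j hj he
      have hi' := List.mem_range.1 hi
      have hj' := List.mem_range.1 hj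
      simp only [Function.comp_apply, Nat.succ_eq_add_one] at he
      by_contra hij
      by_cases hi1 : i + 1 = ℓ <;> by_cases hj1 : j + 1 = ℓ
      · omega
      · rw [hi1, hclose] at he
        exact hne 0 (j+1) (by omega) (by omega) (by omega) he
      · rw [hj1, hclose] at he
        exact hne (i+1) 0 (by omega) (by omega) (by omega) he
      · exact hne (i+1) (j+1) (by omega) (by omega) (by omega) he
  obtain ⟨x, hx, y, hy, hxy, hnotE⟩ := Hch (f 0) w hcyc (by omega)
  have hidx : ∀ z, z ∈ w.support → ∃ i, i < ℓ ∧ f i = z := by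
    intro z hz
    rw [hsupp] at hz
    obtain ⟨i, hi, he⟩ := List.mem_map.1 hz
    have hi' := List.mem_range.1 hi
    by_cases h : i = ℓ
    · exact ⟨0, by omega, by rw [← hclose, ← h]; exact he⟩
    · exact ⟨i, by omega, he⟩
  obtain ⟨i, hiℓ, rfl⟩ := hidx x hx
  obtain ⟨j, hjℓ, rfl⟩ := hidx y hy
  have hij : i ≠ j := fun h => (G.ne_of_adj hxy) (by rw [h])
  have hrel := ((hadjiff _ _).1 hxy).2
  have key : ∀ s t, s < t → t < ℓ → (a (f s) (f t) ∨ b (f s) (f t)) →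
      s(f s, f t) ∉ w.edges → False := by
    intro s t hst htl hrel' hnot
    by_cases hd1 : t - s = 1
    · refine hnot ?_
      rw [hedges]
      refine List.mem_map.2 ⟨s, List.mem_range.2 (by omega), ?_⟩
      rw [(by omega : s + 1 = t)]
    · by_cases hdtop : s = 0 ∧ t = ℓ - 1
      · refine hnot ?_
        rw [hedges]
        refine List.mem_map.2 ⟨ℓ - 1, List.mem_range.2 (by omega), ?_⟩
        rw [(by omega : ℓ - 1 + 1 = ℓ), hclose, hdtop.1, hdtop.2]
        exact Sym2.eq_swap
      · have hd2 : 2 ≤ t - s := by omega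
        have hdle : t - s ≤ ℓ - 2 := by omega
        have := chord_kill has hat hbs hbt hf hmin (t - s) hd2 hdle s (by omega)
        rw [(by omega : s + (t - s) = t)] at this
        exact this hrel'
  rcases Nat.lt_or_ge i j with hlt | hge
  · exact key i j hlt hjℓ hrel hnotE
  · have hlt : j < i := by omega
    refine key j i hlt hiℓ ?_ ?_
    · rcases hrel with h | h
      · exact Or.inl (has _ _ h)
      · exact Or.inr (hbs _ _ h)
    · rw [Sym2.eq_swap]
      exact hnotE

end Contra


lemma peel {L M : Submodule ℝ (Fin n → ℝ)} (hL : IsRootSubspace L) {x : Fin n → ℝ}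
    (hx : x ∈ L ⊓ M) (i : Fin n)
    (hleaf : ∀ j : Fin n, x j ≠ 0 → rootVec n i j ∈ L → rootVec n i j ∈ M) :
    ∃ y, y ∈ Submodule.span ℝ (rootsIn (L ⊓ M)) ∧ x - y ∈ L ⊓ M ∧
      (∀ j, (x - y) j ≠ 0 → x j ≠ 0) ∧ (x - y) i = 0 := by
  classical
  set A := Finset.univ.filter (fun j => rootVec n i j ∈ L) with hA
  have hsum : ∑ j ∈ A, x j = 0 := by
    have hinv : ∀ u w : Fin n, rootVec n u w ∈ L →
        ((rootVec n i u ∈ L) ↔ (rootVec n i w ∈ L)) :=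
      fun u w h => ⟨fun h' => rel_trans h' h, fun h' => rel_trans h' (rel_symm h)⟩
    have hx' : x ∈ Submodule.span ℝ (rootsIn L) := by
      rw [← (isRootSubspace_iff L).1 hL]
      exact (Submodule.mem_inf.1 hx).1
    have := sfun_vanish (fun j => rootVec n i j ∈ L) L hinv x hx'
    rwa [sfun_apply] at this
  set y : Fin n → ℝ := ∑ j ∈ A, x j • rootVec n j i with hy
  have hyl : ∀ l, y l = if rootVec n i l ∈ L then x l else 0 := by
    intro l
    have h0 : y l = ∑ j ∈ A, x j * ((if l = j then 1 else 0) - (if l = i then 1 else 0)) := by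
      rw [hy, Finset.sum_apply]
      exact Finset.sum_congr rfl fun j _ => by rw [Pi.smul_apply, rv_apply, smul_eq_mul]
    have h1 : ∑ j ∈ A, x j * (if l = j then (1:ℝ) else 0) = if l ∈ A then x l else 0 := by
      rw [← Finset.sum_ite_eq A l x]
      exact Finset.sum_congr rfl fun j _ => by split_ifs with h <;> ring
    have h2 : ∑ j ∈ A, x j * (if l = i then (1:ℝ) else 0) = 0 := by
      rw [← Finset.sum_mul, hsum, zero_mul]
    rw [h0]
    simp only [mul_sub]
    rw [Finset.sum_sub_distrib, h1, h2, sub_zero, hA]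
    simp [Finset.mem_filter]
  have hyspan : y ∈ Submodule.span ℝ (rootsIn (L ⊓ M)) := by
    rw [hy]
    refine Submodule.sum_mem _ fun j hj => ?_
    by_cases hxj : x j = 0
    · rw [hxj, zero_smul]; exact Submodule.zero_mem _
    by_cases hji : j = i
    · rw [hji, rv_self, smul_zero]; exact Submodule.zero_mem _
    · refine Submodule.smul_mem _ _ (Submodule.subset_span ?_)
      have hjL : rootVec n i j ∈ L := (Finset.mem_filter.1 hj).2
      have hjM : rootVec n i j ∈ M := hleaf j hxj hjL
      exact ⟨j, i, hji, rfl, Submodule.mem_inf.2 ⟨rel_symm hjL, rel_symm hjM⟩⟩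
  refine ⟨y, hyspan, Submodule.sub_mem _ hx (span_rootsIn_le _ hyspan), ?_, ?_⟩
  · intro j hj
    by_contra hxj
    apply hj
    rw [Pi.sub_apply, hyl j, hxj]
    split_ifs <;> ring
  · rw [Pi.sub_apply, hyl i, if_pos (rel_refl i)]
    ring

open SimpleGraph in
lemma part2 {L M : Submodule ℝ (Fin n → ℝ)}
    (hL : IsRootSubspace L) (hM : IsRootSubspace M)
    (G : SimpleGraph (Fin n))
    (hG : G = SimpleGraph.fromRel (fun a b => rootVec n a b ∈ L) ⊔
        SimpleGraph.fromRel (fun a b => rootVec n a b ∈ M))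
    (Hch : ∀ (v : Fin n) (c : G.Walk v v), c.IsCycle → 4 ≤ c.length →
        ∃ x ∈ c.support, ∃ y ∈ c.support, G.Adj x y ∧ s(x, y) ∉ c.edges) :
    IsRootSubspace (L ⊓ M) := by
  classical
  set a : Fin n → Fin n → Prop := fun i j => rootVec n i j ∈ L with ha
  set b : Fin n → Fin n → Prop := fun i j => rootVec n i j ∈ M with hb
  have har : ∀ x, a x x := fun x => rel_refl x
  have has : ∀ x y, a x y → a y x := fun x y h => rel_symm h
  have hat : ∀ x y z, a x y → a y z → a x z := fun x y z h1 h2 => rel_trans h1 h2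
  have hbr : ∀ x, b x x := fun x => rel_refl x
  have hbs : ∀ x y, b x y → b y x := fun x y h => rel_symm h
  have hbt : ∀ x y z, b x y → b y z → b x z := fun x y z h1 h2 => rel_trans h1 h2
  have hadjiff : ∀ x y, G.Adj x y ↔ x ≠ y ∧ (a x y ∨ b x y) := by
    intro x y
    rw [hG]
    constructor
    · rintro (⟨hne', h | h⟩ | ⟨hne', h | h⟩)
      · exact ⟨hne', Or.inl h⟩
      · exact ⟨hne', Or.inl (rel_symm h)⟩
      · exact ⟨hne', Or.inr h⟩
      · exact ⟨hne', Or.inr (rel_symm h)⟩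
    · rintro ⟨hne', h | h⟩
      · exact Or.inl ⟨hne', Or.inl h⟩
      · exact Or.inr ⟨hne', Or.inl h⟩
  rw [isRootSubspace_iff]
  refine le_antisymm ?_ (span_rootsIn_le _)
  have main : ∀ (N : ℕ) (x : Fin n → ℝ), x ∈ L ⊓ M →
      (Finset.univ.filter (fun j => x j ≠ 0)).card ≤ N →
      x ∈ Submodule.span ℝ (rootsIn (L ⊓ M)) := by
    intro N
    induction N with
    | zero =>
      intro x hx hcard
      have hx0 : x = 0 := by
        funext j
        by_contra hj
        have hmem : j ∈ Finset.univ.filter (fun j => x j ≠ 0) :=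
          Finset.mem_filter.2 ⟨Finset.mem_univ _, hj⟩
        have := Finset.card_pos.2 ⟨j, hmem⟩
        omega
      rw [hx0]
      exact Submodule.zero_mem _
    | succ N ih =>
      intro x hx hcard
      set S := Finset.univ.filter (fun j => x j ≠ 0) with hS
      by_cases hSne : S.Nonempty
      · by_cases hleaf : ∃ i ∈ S, (∀ j ∈ S, rootVec n i j ∈ L → rootVec n i j ∈ M) ∨
            (∀ j ∈ S, rootVec n i j ∈ M → rootVec n i j ∈ L)
        · obtain ⟨i, hiS, hcase⟩ := hleaf
          have hiSx : x i ≠ 0 := (Finset.mem_filter.1 hiS).2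
          have hstep : ∃ y, y ∈ Submodule.span ℝ (rootsIn (L ⊓ M)) ∧ x - y ∈ L ⊓ M ∧
              (∀ j, (x - y) j ≠ 0 → x j ≠ 0) ∧ (x - y) i = 0 := by
            rcases hcase with hc | hc
            · exact peel hL hx i (fun j hxj hjL =>
                hc j (Finset.mem_filter.2 ⟨Finset.mem_univ _, hxj⟩) hjL)
            · have hcomm : M ⊓ L = L ⊓ M := inf_comm M L
              have hx' : x ∈ M ⊓ L := by rw [hcomm]; exact hx
              obtain ⟨y, h1, h2, h3, h4⟩ := peel hM hx' i (fun j hxj hjM =>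
                hc j (Finset.mem_filter.2 ⟨Finset.mem_univ _, hxj⟩) hjM)
              rw [hcomm] at h1 h2
              exact ⟨y, h1, h2, h3, h4⟩
          obtain ⟨y, hyspan, hxy, hsupp, hzi⟩ := hstep
          have hsub : (Finset.univ.filter fun j => (x - y) j ≠ 0) ⊆ S.erase i := by
            intro j hj
            have hj' := (Finset.mem_filter.1 hj).2
            refine Finset.mem_erase.2 ⟨?_, Finset.mem_filter.2 ⟨Finset.mem_univ _, hsupp j hj'⟩⟩
            intro hji
            rw [hji] at hj'
            exact hj' hzi
          have hcard' : (Finset.univ.filter fun j => (x - y) j ≠ 0).card ≤ N := by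
            have h1 : (Finset.univ.filter fun j => (x - y) j ≠ 0).card ≤ (S.erase i).card :=
              Finset.card_le_card hsub
            have h2 : (S.erase i).card = S.card - 1 := Finset.card_erase_of_mem hiS
            have h3 : 1 ≤ S.card := Finset.card_pos.2 ⟨i, hiS⟩
            omega
          have hind := ih (x - y) hxy hcard'
          have hxeq : x = (x - y) + y := by ring
          rw [hxeq]
          exact Submodule.add_mem _ hind hyspan
        · push_neg at hleaf
          exfalso
          have noleaf : ∀ i ∈ S, (∃ j ∈ S, a i j ∧ ¬ b i j) ∧ (∃ j ∈ S, b i j ∧ ¬ a i j) := by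
            intro i hi
            obtain ⟨h1, h2⟩ := hleaf i hi
            obtain ⟨j1, hj1, hj1L, hj1M⟩ := h1
            obtain ⟨j2, hj2, hj2M, hj2L⟩ := h2
            exact ⟨⟨j1, hj1, hj1L, hj1M⟩, ⟨j2, hj2, hj2M, hj2L⟩⟩
          obtain ⟨ℓ₀, f₀, hAC⟩ := exists_ACy har has hat hbr hbs hbt hSne noleaf
          have hQ : ∃ ℓ, ∃ f : ℕ → Fin n, ACy a b ℓ f ∨ ACy b a ℓ f := ⟨ℓ₀, f₀, hAC⟩
          set ℓm := Nat.find hQ with hℓm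
          obtain ⟨fm, hm⟩ := Nat.find_spec hQ
          have hmin : ∀ ℓ' (f' : ℕ → Fin n), ℓ' < ℓm → ¬(ACy a b ℓ' f' ∨ ACy b a ℓ' f') :=
            fun ℓ' f' hlt h' => Nat.find_min hQ hlt ⟨f', h'⟩
          rcases hm with hm | hm
          · exact acy_contra har has hat hbr hbs hbt hadjiff Hch hm hmin
          · refine acy_contra hbr hbs hbt har has hat ?_ Hch hm
              (fun ℓ' f' hlt h' => hmin ℓ' f' hlt h'.symm)
            intro x y
            rw [hadjiff x y]
            constructor
            · rintro ⟨h1, h2⟩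
              exact ⟨h1, h2.symm⟩
            · rintro ⟨h1, h2⟩
              exact ⟨h1, h2.symm⟩
      · have hx0 : x = 0 := by
          funext j
          by_contra hj
          exact hSne ⟨j, Finset.mem_filter.2 ⟨Finset.mem_univ _, hj⟩⟩
        rw [hx0]
        exact Submodule.zero_mem _
  intro x hx
  exact main _ x hx le_rfl

end Stmt2Aux



/-- `L ∩ M` is a root subspace iff every cycle of length at least four in the
graph union `Γ_L ∪ Γ_M` has a chord (an edge of the graph between two vertices of
the cycle which is not an edge of the cycle). -/
theorem stmt2 {n : ℕ} (L M : Submodule ℝ (Fin n → ℝ))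
    (hL : IsRootSubspace L) (hM : IsRootSubspace M)
    (G : SimpleGraph (Fin n))
    (hG : G = SimpleGraph.fromRel (fun a b => rootVec n a b ∈ L) ⊔
        SimpleGraph.fromRel (fun a b => rootVec n a b ∈ M)) :
    IsRootSubspace (L ⊓ M) ↔
      ∀ (v : Fin n) (c : G.Walk v v), c.IsCycle → 4 ≤ c.length →
        ∃ x ∈ c.support, ∃ y ∈ c.support, G.Adj x y ∧ s(x, y) ∉ c.edges := by
  constructor
  · intro h
    exact Stmt2Aux.part1 G hG h
  · intro h
    exact Stmt2Aux.part2 hL hM G hG h
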